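/- Let λ, μ ∈ ℂ with Re λ ≠ 0 and Re μ ≠ 0, and let t > 0. Then the function s ↦ g_s(λ) g_{t−s}(μ) is integrable on ℝ and ∫_{−∞}^{∞} g_s(λ) g_{t−s}(μ) ds = exp_t⁺[λ, μ], where exp_t⁺[λ, μ] is defined as follows: (e^{λt} − e^{μt})/(λ − μ) if Re λ < 0, Re μ < 0, and λ ≠ μ; t e^{λt} if Re λ < 0 and λ = μ; e^{λt}/(λ − μ) if Re λ < 0 and Re μ > 0; −e^{μt}/(λ − μ) if Re λ > 0 and Re μ < 0; 0 if Re λ > 0 and Re μ > 0. -/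

import Mathlib

open Complex MeasureTheory

/-- The scalar Green's function `g_t(λ)`: for `t > 0` (and `t = 0`), `g_t(λ) = e^{λ t}` if
`Re λ < 0` and `g_t(λ) = 0` if `Re λ > 0`; for `t < 0`, `g_t(λ) = −e^{λ t}` if `Re λ > 0`
and `g_t(λ) = 0` if `Re λ < 0`. -/
noncomputable def greenG (t : ℝ) (lam : ℂ) : ℂ :=
  if 0 ≤ t then (if lam.re < 0 then Complex.exp (lam * t) else 0)
  else (if 0 < lam.re then -Complex.exp (lam * t) else 0)

/-- The divided difference `exp_t⁺[λ, μ]` of the function `exp_t⁺`. -/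
noncomputable def expPlusDD (t : ℝ) (lam mu : ℂ) : ℂ :=
  if lam.re < 0 then
    (if mu.re < 0 then
      (if lam = mu then (t : ℂ) * Complex.exp (lam * t)
        else (Complex.exp (lam * t) - Complex.exp (mu * t)) / (lam - mu))
      else Complex.exp (lam * t) / (lam - mu))
  else
    (if mu.re < 0 then -Complex.exp (mu * t) / (lam - mu) else 0)

section Aux

open Set Filter Topology

lemma aux_hasDerivAt {c : ℂ} (hc : c ≠ 0) (x : ℝ) :
    HasDerivAt (fun y : ℝ => Complex.exp (c * y) / c) (Complex.exp (c * x)) x := by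
  rw [← mul_div_cancel_right₀ (Complex.exp (c * x)) hc]
  apply ((Complex.hasDerivAt_exp _).comp x _).div_const c
  simpa only [mul_one, id_eq] using ((hasDerivAt_id (x : ℂ)).const_mul c).comp_ofReal

lemma aux_norm (c : ℂ) (s : ℝ) : ‖Complex.exp (c * s)‖ = Real.exp (c.re * s) := by
  rw [Complex.norm_exp]
  simp [Complex.mul_re]

lemma integrableOn_cexp_Ioi (a : ℝ) {c : ℂ} (hc : c.re < 0) :
    IntegrableOn (fun s : ℝ => Complex.exp (c * s)) (Ioi a) := by
  refine (exp_neg_integrableOn_Ioi a (neg_pos.mpr hc)).mono' ?_ ?_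
  · exact (Complex.continuous_exp.comp
      (continuous_const.mul Complex.continuous_ofReal)).aestronglyMeasurable
  · filter_upwards with s
    rw [aux_norm]
    simp

lemma tendsto_cexp_atTop {c : ℂ} (hc : c.re < 0) :
    Tendsto (fun y : ℝ => Complex.exp (c * y)) atTop (𝓝 0) := by
  exact squeeze_zero_norm (a := fun y : ℝ => Real.exp (c.re * y))
    (fun y => le_of_eq (aux_norm c y))
    (Real.tendsto_exp_atBot.comp ((tendsto_const_mul_atBot_of_neg hc).2 tendsto_id))

lemma integral_cexp_Ioi (a : ℝ) {c : ℂ} (hc : c.re < 0) :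
    ∫ s in Ioi a, Complex.exp (c * s) = -Complex.exp (c * a) / c := by
  have hc0 : c ≠ 0 := fun h => by simp [h] at hc
  have h := integral_Ioi_of_hasDerivAt_of_tendsto' (m := 0)
    (fun x _ => aux_hasDerivAt hc0 x) (integrableOn_cexp_Ioi a hc)
    (by simpa using (tendsto_cexp_atTop hc).div_const c)
  rw [h]; ring

lemma integrableOn_cexp_Iic (a : ℝ) {c : ℂ} (hc : 0 < c.re) :
    IntegrableOn (fun s : ℝ => Complex.exp (c * s)) (Iic a) := by
  have h1 : Integrable ((Ioi (-a)).indicator fun s : ℝ => Complex.exp (-c * s)) :=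
    ((integrableOn_cexp_Ioi (-a) (by simpa using hc))).integrable_indicator measurableSet_Ioi
  have h2 := h1.comp_neg
  have h3 : (fun x : ℝ => ((Ioi (-a)).indicator fun s : ℝ => Complex.exp (-c * s)) (-x))
      = (Iio a).indicator fun s : ℝ => Complex.exp (c * s) := by
    funext x
    have hcast : ((-x : ℝ) : ℂ) = -(x : ℂ) := by push_cast; ring
    by_cases hx : x < a
    · rw [Set.indicator_of_mem (by simpa using hx), Set.indicator_of_mem (Set.mem_Iio.mpr hx)]
      rw [hcast]; ring_nf
    · rw [Set.indicator_of_notMem (by simpa using hx), Set.indicator_of_notMem (by simpa using hx)]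
  rw [h3] at h2
  exact (integrableOn_Iic_iff_integrableOn_Iio (by simp)).2
    ((integrable_indicator_iff measurableSet_Iio).1 h2)

lemma tendsto_cexp_atBot {c : ℂ} (hc : 0 < c.re) :
    Tendsto (fun y : ℝ => Complex.exp (c * y)) atBot (𝓝 0) := by
  exact squeeze_zero_norm (a := fun y : ℝ => Real.exp (c.re * y))
    (fun y => le_of_eq (aux_norm c y))
    (Real.tendsto_exp_atBot.comp ((tendsto_const_mul_atBot_of_pos hc).2 tendsto_id))

lemma integral_cexp_Iic (a : ℝ) {c : ℂ} (hc : 0 < c.re) :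
    ∫ s in Iic a, Complex.exp (c * s) = Complex.exp (c * a) / c := by
  have hc0 : c ≠ 0 := fun h => by simp [h] at hc
  have h := integral_Iic_of_hasDerivAt_of_tendsto (m := 0)
    (f := fun y : ℝ => Complex.exp (c * y) / c)
    ((aux_hasDerivAt hc0 a).continuousAt.continuousWithinAt)
    (fun x _ => aux_hasDerivAt hc0 x) (integrableOn_cexp_Iic a hc)
    (by simpa using (tendsto_cexp_atBot hc).div_const c)
  rw [h]; ring

lemma exp_split (lam mu : ℂ) (t s : ℝ) :
    Complex.exp (lam * s) * Complex.exp (mu * (↑(t - s) : ℝ)) =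
      Complex.exp (mu * t) * Complex.exp ((lam - mu) * s) := by
  rw [← Complex.exp_add, ← Complex.exp_add]
  congr 1
  push_cast
  ring

end Aux

/-- Key identity in the proof of **Theorem 15**, case `t > 0`: for `Re λ ≠ 0`, `Re μ ≠ 0`
and `t > 0`, the function `s ↦ g_s(λ) g_{t−s}(μ)` is integrable on `ℝ` and
`∫_{−∞}^{∞} g_s(λ) g_{t−s}(μ) ds = exp_t⁺[λ, μ]`. -/
theorem integral_greenG_mul_greenG_pos (lam mu : ℂ) (hlam : lam.re ≠ 0) (hmu : mu.re ≠ 0)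
    (t : ℝ) (ht : 0 < t) :
    Integrable (fun s : ℝ => greenG s lam * greenG (t - s) mu) ∧
    ∫ s : ℝ, greenG s lam * greenG (t - s) mu = expPlusDD t lam mu := by
  rcases hlam.lt_or_gt with hl | hl <;> rcases hmu.lt_or_gt with hm | hm
  · -- Re lam < 0, Re mu < 0
    have hfun : (fun s : ℝ => greenG s lam * greenG (t - s) mu)
        = (Set.Icc 0 t).indicator
            (fun s : ℝ => Complex.exp (mu * t) * Complex.exp ((lam - mu) * s)) := by
      funext s
      by_cases h0 : 0 ≤ s
      · by_cases h1 : s ≤ t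
        · rw [Set.indicator_of_mem (Set.mem_Icc.mpr ⟨h0, h1⟩)]
          simp only [greenG, if_pos h0, if_pos hl, if_pos (by linarith : (0:ℝ) ≤ t - s),
            if_pos hm]
          exact exp_split lam mu t s
        · rw [Set.indicator_of_notMem (by simp [Set.mem_Icc, h1])]
          simp only [greenG, if_neg (by linarith : ¬ (0:ℝ) ≤ t - s), if_neg (not_lt.2 hm.le),
            mul_zero]
      · rw [Set.indicator_of_notMem (by simp [Set.mem_Icc, h0])]
        simp only [greenG, if_neg h0, if_neg (not_lt.2 hl.le), zero_mul]
    have hint : IntegrableOn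
        (fun s : ℝ => Complex.exp (mu * t) * Complex.exp ((lam - mu) * s)) (Set.Icc 0 t) := by
      apply Continuous.integrableOn_Icc
      exact continuous_const.mul (Complex.continuous_exp.comp
        (continuous_const.mul Complex.continuous_ofReal))
    refine ⟨hfun ▸ hint.integrable_indicator measurableSet_Icc, ?_⟩
    rw [hfun, MeasureTheory.integral_indicator measurableSet_Icc,
      MeasureTheory.integral_Icc_eq_integral_Ioc, ← intervalIntegral.integral_of_le ht.le,
      intervalIntegral.integral_const_mul]
    by_cases he : lam = mu
    · subst he
      simp only [expPlusDD, if_pos hl, if_pos rfl, sub_self, zero_mul, Complex.exp_zero,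
        intervalIntegral.integral_const, sub_zero, Complex.real_smul, mul_one, if_true]
      ring
    · rw [integral_exp_mul_complex (sub_ne_zero.2 he)]
      simp only [expPlusDD, if_pos hl, if_pos hm, if_neg he, Complex.ofReal_zero, mul_zero,
        Complex.exp_zero]
      rw [mul_div_assoc', mul_sub, mul_one, ← Complex.exp_add,
        show mu * (t : ℂ) + (lam - mu) * t = lam * t by ring]
  · -- Re lam < 0 < Re mu : support (t, ∞)
    have hc : (lam - mu).re < 0 := by simp [Complex.sub_re]; linarith
    have hfun : (fun s : ℝ => greenG s lam * greenG (t - s) mu)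
        = (Set.Ioi t).indicator
            (fun s : ℝ => -Complex.exp (mu * t) * Complex.exp ((lam - mu) * s)) := by
      funext s
      by_cases h1 : t < s
      · rw [Set.indicator_of_mem (Set.mem_Ioi.mpr h1)]
        simp only [greenG, if_pos (by linarith : (0:ℝ) ≤ s), if_pos hl,
          if_neg (by linarith : ¬ (0:ℝ) ≤ t - s), if_pos hm, mul_neg, neg_mul]
        rw [exp_split lam mu t s]
      · rw [Set.indicator_of_notMem (by simpa using h1)]
        simp only [greenG, if_pos (by linarith : (0:ℝ) ≤ t - s), if_neg (not_lt.2 hm.le),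
          mul_zero]
    have hint : IntegrableOn
        (fun s : ℝ => -Complex.exp (mu * t) * Complex.exp ((lam - mu) * s)) (Set.Ioi t) :=
      (integrableOn_cexp_Ioi t hc).const_mul _
    refine ⟨hfun ▸ hint.integrable_indicator measurableSet_Ioi, ?_⟩
    rw [hfun, MeasureTheory.integral_indicator measurableSet_Ioi,
      MeasureTheory.integral_const_mul, integral_cexp_Ioi t hc]
    simp only [expPlusDD, if_pos hl, if_neg (not_lt.2 hm.le)]
    rw [mul_div_assoc', neg_mul_neg, ← Complex.exp_add,
      show mu * (t : ℂ) + (lam - mu) * t = lam * t by ring]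
  · -- Re mu < 0 < Re lam : support (-∞, 0)
    have hc : 0 < (lam - mu).re := by simp [Complex.sub_re]; linarith
    have hfun : (fun s : ℝ => greenG s lam * greenG (t - s) mu)
        = (Set.Iio 0).indicator
            (fun s : ℝ => -Complex.exp (mu * t) * Complex.exp ((lam - mu) * s)) := by
      funext s
      by_cases h0 : s < 0
      · rw [Set.indicator_of_mem (Set.mem_Iio.mpr h0)]
        simp only [greenG, if_neg (not_le.2 h0), if_pos hl, if_pos (by linarith : (0:ℝ) ≤ t - s),
          if_pos hm, neg_mul]
        rw [exp_split lam mu t s]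
      · rw [Set.indicator_of_notMem (by simpa using h0)]
        simp only [greenG, if_pos (not_lt.1 h0), if_neg (not_lt.2 hl.le), zero_mul]
    have hint : IntegrableOn
        (fun s : ℝ => -Complex.exp (mu * t) * Complex.exp ((lam - mu) * s)) (Set.Iio 0) :=
      ((integrableOn_cexp_Iic 0 hc).mono_set Set.Iio_subset_Iic_self).const_mul _
    refine ⟨hfun ▸ hint.integrable_indicator measurableSet_Iio, ?_⟩
    rw [hfun, MeasureTheory.integral_indicator measurableSet_Iio,
      ← MeasureTheory.integral_Iic_eq_integral_Iio, MeasureTheory.integral_const_mul,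
      integral_cexp_Iic 0 hc]
    simp only [expPlusDD, if_neg (not_lt.2 hl.le), if_pos hm, Complex.ofReal_zero, mul_zero,
      Complex.exp_zero]
    ring
  · -- both positive: identically zero
    have hfun : (fun s : ℝ => greenG s lam * greenG (t - s) mu) = fun _ : ℝ => (0 : ℂ) := by
      funext s
      by_cases h0 : 0 ≤ s
      · simp only [greenG, if_pos h0, if_neg (not_lt.2 hl.le), zero_mul]
      · simp only [greenG, if_pos (by linarith [not_le.1 h0] : (0:ℝ) ≤ t - s),
          if_neg (not_lt.2 hm.le), mul_zero]
    rw [hfun]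
    refine ⟨integrable_zero _ _ _, ?_⟩
    simp [expPlusDD, not_lt.2 hl.le, not_lt.2 hm.le]
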